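/- arXiv:2408.14705 — 3 statements merged into one kernel-verified Lean document; each statement's English description precedes it below -/
import Mathlib

section
/- Suppose nonnegative integers t_{i,j} (indexed by i,j ≥ 0 with i+j ≥ 2, finitely many nonzero) satisfy: (a) Σ ij·t_{i,j} = n(n−k); (b) Σ (C(i,2)+C(j,2))·t_{i,j} = C(n,2)+C(n−k,2); and (c) the Hirzebruch-type inequality Σ_{i+j=2} t_{i,j} + Σ_{i+j=3} t_{i,j} ≥ (2n−k) + Σ_{i+j≥5} ((i+j)−4)·t_{i,j}. Then t_{1,1} + t_{1,2} + t_{2,1} + t_{2,2} + t_{2,3} + t_{3,2} + t_{3,3} ≥ (6n − k(k+3))/4. -/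
private lemma two_choose_two' (m : ℕ) : (2:ℤ) * (m.choose 2 : ℤ) = (m:ℤ) * ((m:ℤ) - 1) := by
  induction m with
  | zero => simp
  | succ p ih =>
    rw [Nat.choose_succ_succ, Nat.choose_one_right]
    push_cast
    linear_combination ih

private lemma sum_single4' (t : (ℕ × ℕ) →₀ ℕ) (q : ℕ × ℕ) :
    (t.sum fun p v => if p = q then 4 * (v:ℤ) else 0) = 4 * (t q : ℤ) := by
  rw [Finsupp.sum_ite_eq']
  split
  · rfl
  · next h => simp [Finsupp.notMem_support_iff.mp h]

set_option maxHeartbeats 2000000 in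
private lemma pointwise' (i j : ℕ) (v : ℤ) (hv : 0 ≤ v) (hij : 2 ≤ i + j) :
    ((i:ℤ) + j - ((i:ℤ) - j)^2) * v
      + 2 * (if i + j = 2 ∨ i + j = 3 then v else 0)
      - 2 * (if 5 ≤ i + j then ((i:ℤ) + j - 4) * v else 0)
    ≤ (if (i,j) = ((1:ℕ),(1:ℕ)) then 4*v else 0) + (if (i,j) = ((1:ℕ),(2:ℕ)) then 4*v else 0)
      + (if (i,j) = ((2:ℕ),(1:ℕ)) then 4*v else 0) + (if (i,j) = ((2:ℕ),(2:ℕ)) then 4*v else 0)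
      + (if (i,j) = ((2:ℕ),(3:ℕ)) then 4*v else 0) + (if (i,j) = ((3:ℕ),(2:ℕ)) then 4*v else 0)
      + (if (i,j) = ((3:ℕ),(3:ℕ)) then 4*v else 0) := by
  by_cases h8 : 8 ≤ i + j
  · have h1 : ¬(i + j = 2 ∨ i + j = 3) := by omega
    have h5 : 5 ≤ i + j := by omega
    simp only [Prod.mk.injEq]
    rw [if_neg h1, if_pos h5,
      if_neg (by omega : ¬(i = 1 ∧ j = 1)), if_neg (by omega : ¬(i = 1 ∧ j = 2)),
      if_neg (by omega : ¬(i = 2 ∧ j = 1)), if_neg (by omega : ¬(i = 2 ∧ j = 2)),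
      if_neg (by omega : ¬(i = 2 ∧ j = 3)), if_neg (by omega : ¬(i = 3 ∧ j = 2)),
      if_neg (by omega : ¬(i = 3 ∧ j = 3))]
    have h8' : (8:ℤ) ≤ (i:ℤ) + j := by exact_mod_cast h8
    nlinarith [mul_nonneg hv (sq_nonneg ((i:ℤ) - j)), mul_nonneg hv (by linarith : (0:ℤ) ≤ (i:ℤ) + j - 8)]
  · have hi : i ≤ 7 := by omega
    have hj : j ≤ 7 := by omega
    interval_cases i <;> interval_cases j <;>
      first
        | omega
        | ((norm_num [Prod.ext_iff]) <;> linarith)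

/-- From the bichromatic and monochromatic pair-counting identities for `n` green and
`n - k` red points, together with Hirzebruch's inequality, the number of
1-equichromatic lines through at most six points is at least `(6n - k(k+3))/4`. -/
theorem stmt_5 (n k : ℕ) (hk : k ≤ n) (t : (ℕ × ℕ) →₀ ℕ)
    (hsupp : ∀ p ∈ t.support, 2 ≤ p.1 + p.2)
    (ha : t.sum (fun p v => (p.1 : ℤ) * (p.2 : ℤ) * v) = (n : ℤ) * ((n : ℤ) - k))
    (hb : t.sum (fun p v => ((p.1.choose 2 : ℤ) + (p.2.choose 2 : ℤ)) * v)
        = (n.choose 2 : ℤ) + ((n - k).choose 2 : ℤ))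
    (hc : t.sum (fun p v => if p.1 + p.2 = 2 ∨ p.1 + p.2 = 3 then (v : ℤ) else 0)
        ≥ (2 * (n : ℤ) - k)
          + t.sum (fun p v => if 5 ≤ p.1 + p.2 then ((p.1 : ℤ) + p.2 - 4) * v else 0)) :
    ((t (1, 1) + t (1, 2) + t (2, 1) + t (2, 2) + t (2, 3) + t (3, 2) + t (3, 3) : ℕ) : ℚ)
      ≥ (6 * (n : ℚ) - (k : ℚ) * (k + 3)) / 4 := by
  have key : 6 * (n:ℤ) - (k:ℤ) * ((k:ℤ) + 3)
      ≤ 4 * ((t (1, 1) + t (1, 2) + t (2, 1) + t (2, 2) + t (2, 3) + t (3, 2) + t (3, 3) : ℕ) : ℤ) := by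
    have hW : t.sum (fun p v => (((p.1:ℤ) + p.2 - ((p.1:ℤ) - p.2)^2) * v
          + 2 * (if p.1 + p.2 = 2 ∨ p.1 + p.2 = 3 then (v:ℤ) else 0)
          - 2 * (if 5 ≤ p.1 + p.2 then ((p.1:ℤ) + p.2 - 4) * v else 0)))
        = 2 * t.sum (fun p v => (p.1 : ℤ) * (p.2 : ℤ) * v)
          - 2 * t.sum (fun p v => ((p.1.choose 2 : ℤ) + (p.2.choose 2 : ℤ)) * v)
          + 2 * t.sum (fun p v => if p.1 + p.2 = 2 ∨ p.1 + p.2 = 3 then (v : ℤ) else 0)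
          - 2 * t.sum (fun p v => if 5 ≤ p.1 + p.2 then ((p.1 : ℤ) + p.2 - 4) * v else 0) := by
      simp only [Finsupp.sum, Finset.mul_sum, ← Finset.sum_sub_distrib, ← Finset.sum_add_distrib]
      apply Finset.sum_congr rfl
      intro p _
      have h1 := two_choose_two' p.1
      have h2 := two_choose_two' p.2
      linear_combination (t p : ℤ) * h1 + (t p : ℤ) * h2
    have hupp : t.sum (fun p v => (((p.1:ℤ) + p.2 - ((p.1:ℤ) - p.2)^2) * v
          + 2 * (if p.1 + p.2 = 2 ∨ p.1 + p.2 = 3 then (v:ℤ) else 0)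
          - 2 * (if 5 ≤ p.1 + p.2 then ((p.1:ℤ) + p.2 - 4) * v else 0)))
        ≤ 4 * ((t (1, 1) + t (1, 2) + t (2, 1) + t (2, 2) + t (2, 3) + t (3, 2) + t (3, 3) : ℕ) : ℤ) := by
      have step : t.sum (fun p v => (((p.1:ℤ) + p.2 - ((p.1:ℤ) - p.2)^2) * v
            + 2 * (if p.1 + p.2 = 2 ∨ p.1 + p.2 = 3 then (v:ℤ) else 0)
            - 2 * (if 5 ≤ p.1 + p.2 then ((p.1:ℤ) + p.2 - 4) * v else 0)))
          ≤ t.sum (fun p v =>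
              (if p = ((1:ℕ),(1:ℕ)) then 4*(v:ℤ) else 0) + (if p = ((1:ℕ),(2:ℕ)) then 4*(v:ℤ) else 0)
              + (if p = ((2:ℕ),(1:ℕ)) then 4*(v:ℤ) else 0) + (if p = ((2:ℕ),(2:ℕ)) then 4*(v:ℤ) else 0)
              + (if p = ((2:ℕ),(3:ℕ)) then 4*(v:ℤ) else 0) + (if p = ((3:ℕ),(2:ℕ)) then 4*(v:ℤ) else 0)
              + (if p = ((3:ℕ),(3:ℕ)) then 4*(v:ℤ) else 0)) := by
        simp only [Finsupp.sum]
        apply Finset.sum_le_sum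
        intro p hp
        have := pointwise' p.1 p.2 (t p) (by positivity) (hsupp p hp)
        simpa using this
      have heval : t.sum (fun (p : ℕ × ℕ) (v : ℕ) =>
              (if p = ((1:ℕ),(1:ℕ)) then 4*(v:ℤ) else 0) + (if p = ((1:ℕ),(2:ℕ)) then 4*(v:ℤ) else 0)
              + (if p = ((2:ℕ),(1:ℕ)) then 4*(v:ℤ) else 0) + (if p = ((2:ℕ),(2:ℕ)) then 4*(v:ℤ) else 0)
              + (if p = ((2:ℕ),(3:ℕ)) then 4*(v:ℤ) else 0) + (if p = ((3:ℕ),(2:ℕ)) then 4*(v:ℤ) else 0)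
              + (if p = ((3:ℕ),(3:ℕ)) then 4*(v:ℤ) else 0))
          = 4 * (t (1,1) : ℤ) + 4 * (t (1,2) : ℤ) + 4 * (t (2,1) : ℤ) + 4 * (t (2,2) : ℤ)
            + 4 * (t (2,3) : ℤ) + 4 * (t (3,2) : ℤ) + 4 * (t (3,3) : ℤ) := by
        rw [Finsupp.sum_add, Finsupp.sum_add, Finsupp.sum_add, Finsupp.sum_add,
          Finsupp.sum_add, Finsupp.sum_add,
          sum_single4', sum_single4', sum_single4', sum_single4', sum_single4',
          sum_single4', sum_single4']
      rw [heval] at step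
      push_cast
      linarith
    have hnk : ((n - k : ℕ) : ℤ) = (n:ℤ) - k := by
      exact_mod_cast Int.ofNat_sub hk
    have e1 := two_choose_two' n
    have e2 := two_choose_two' (n - k)
    rw [hnk] at e2
    rw [hW, ha, hb] at hupp
    nlinarith [hc, hupp]
  rw [ge_iff_le, div_le_iff₀ (by norm_num : (0:ℚ) < 4)]
  have key' : (6 * (n:ℚ) - (k:ℚ) * ((k:ℚ) + 3))
      ≤ 4 * ((t (1, 1) + t (1, 2) + t (2, 1) + t (2, 2) + t (2, 3) + t (3, 2) + t (3, 3) : ℕ) : ℚ) := by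
    exact_mod_cast key
  linarith
end

section
/- Let P be a finite set of points in the real (or complex) plane consisting of n green and n−k red points, not all collinear, and suppose the pair-counting identities hold together with Melchior's inequality Σ_{m≥2}(3−m)t_m ≥ 3 (where t_m is the number of lines through exactly m points of P). Then the number of 1-equichromatic lines (lines with i ≥ 1 green and j ≥ 1 red points and |i−j| ≤ 1) through at most four points is at least (2n + 6 − k(k+1))/4. -/
open scoped Classical

/-- The finite set of lines determined by a finite point set `P` in the real plane. -/
noncomputable def detLines (P : Finset (ℝ × ℝ)) : Finset (AffineSubspace ℝ (ℝ × ℝ)) :=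
  ((P ×ˢ P).filter fun pq => pq.1 ≠ pq.2).image fun pq => affineSpan ℝ {pq.1, pq.2}

lemma cast_choose_two (a : ℕ) : 2 * ((a.choose 2 : ℕ) : ℤ) = (a:ℤ) * ((a:ℤ) - 1) := by
  cases a with
  | zero => simp
  | succ b =>
    rw [Nat.choose_two_right]
    simp only [Nat.add_sub_cancel]
    have h : 2 ∣ (b+1) * b := by rw [mul_comm]; exact (Nat.even_mul_succ_self b).two_dvd
    have h2 : 2 * ((b+1)*b/2) = (b+1)*b := Nat.mul_div_cancel' h
    calc 2 * (((b+1)*b/2 : ℕ):ℤ) = ((2 * ((b+1)*b/2) : ℕ):ℤ) := by push_cast; ring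
      _ = (((b+1)*b : ℕ):ℤ) := by rw [h2]
      _ = _ := by push_cast; ring

lemma key (i j : ℕ) (h2 : 2 ≤ i + j) :
    2*(i:ℤ)*j - (i:ℤ)*((i:ℤ)-1) - (j:ℤ)*((j:ℤ)-1) + 2*(3 - ((i:ℤ)+j)) ≤
      4 * (if 1 ≤ i ∧ 1 ≤ j ∧ i ≤ j+1 ∧ j ≤ i+1 ∧ i+j ≤ 4 then (1:ℤ) else 0) := by
  by_cases h5 : i + j ≤ 5
  · have hi : i ≤ 5 := by omega
    have hj : j ≤ 5 := by omega
    interval_cases i <;> interval_cases j <;> simp_all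
  · push_neg at h5
    split_ifs with hc
    · omega
    · have hs := sq_nonneg ((i:ℤ) - j)
      have h6 : (6:ℤ) ≤ (i:ℤ) + j := by exact_mod_cast h5
      nlinarith

lemma detLines_two_le (P : Finset (ℝ × ℝ)) (l : AffineSubspace ℝ (ℝ × ℝ)) (hl : l ∈ detLines P) :
    2 ≤ (P.filter (fun p => p ∈ l)).card := by
  simp only [detLines, Finset.mem_image, Finset.mem_filter, Finset.mem_product] at hl
  obtain ⟨⟨p, q⟩, ⟨⟨hp, hq⟩, hne⟩, rfl⟩ := hl
  have hps : ({p, q} : Set (ℝ × ℝ)) ⊆ affineSpan ℝ {p, q} := subset_affineSpan ℝ _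
  have hsub : ({p, q} : Finset (ℝ × ℝ)) ⊆ P.filter (fun x => x ∈ affineSpan ℝ {p, q}) := by
    intro x hx
    simp only [Finset.mem_insert, Finset.mem_singleton] at hx
    rcases hx with rfl | rfl
    · exact Finset.mem_filter.mpr ⟨hp, hps (Set.mem_insert _ _)⟩
    · exact Finset.mem_filter.mpr ⟨hq, hps (Set.mem_insert_of_mem _ rfl)⟩
  calc 2 = ({p, q} : Finset (ℝ × ℝ)).card := (Finset.card_pair hne).symm
    _ ≤ _ := Finset.card_le_card hsub

/-- Purdy–Smith Theorem 2: for `n` green and `n - k` red points in the real plane, not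
all collinear, assuming the pair-counting identities and Melchior's inequality, the
number of 1-equichromatic lines through at most four points is at least
`(2n + 6 - k(k+1))/4`. -/
theorem stmt_9 (n k : ℕ) (hk : k ≤ n) (G R : Finset (ℝ × ℝ)) (hGR : Disjoint G R)
    (hG : G.card = n) (hR : R.card = n - k)
    (hncol : ¬ Collinear ℝ ((G ∪ R : Finset (ℝ × ℝ)) : Set (ℝ × ℝ)))
    (hbi : ∑ l ∈ detLines (G ∪ R),
        (G.filter (fun p => p ∈ l)).card * (R.filter (fun p => p ∈ l)).card
      = G.card * R.card)
    (hmono : ∑ l ∈ detLines (G ∪ R),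
        ((G.filter (fun p => p ∈ l)).card.choose 2 + (R.filter (fun p => p ∈ l)).card.choose 2)
      = G.card.choose 2 + R.card.choose 2)
    (hmel : ∑ l ∈ detLines (G ∪ R),
        (3 - (((G ∪ R).filter (fun p => p ∈ l)).card : ℤ)) ≥ 3) :
    (((detLines (G ∪ R)).filter (fun l =>
        1 ≤ (G.filter (fun p => p ∈ l)).card ∧ 1 ≤ (R.filter (fun p => p ∈ l)).card
        ∧ (G.filter (fun p => p ∈ l)).card ≤ (R.filter (fun p => p ∈ l)).card + 1
        ∧ (R.filter (fun p => p ∈ l)).card ≤ (G.filter (fun p => p ∈ l)).card + 1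
        ∧ (G.filter (fun p => p ∈ l)).card + (R.filter (fun p => p ∈ l)).card ≤ 4)).card : ℚ)
      ≥ (2 * (n : ℚ) + 6 - (k : ℚ) * (k + 1)) / 4 := by
  set L := detLines (G ∪ R) with hLdef
  set ig : AffineSubspace ℝ (ℝ × ℝ) → ℕ := fun l => (G.filter (fun p => p ∈ l)).card with hig
  set jr : AffineSubspace ℝ (ℝ × ℝ) → ℕ := fun l => (R.filter (fun p => p ∈ l)).card with hjr
  -- union filter card = sum
  have hM : ∀ l : AffineSubspace ℝ (ℝ × ℝ),
      ((G ∪ R).filter (fun p => p ∈ l)).card = ig l + jr l := by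
    intro l
    rw [Finset.filter_union,
      Finset.card_union_of_disjoint (Finset.disjoint_filter_filter hGR)]
  have hm2 : ∀ l ∈ L, 2 ≤ ig l + jr l := by
    intro l hl
    rw [← hM l]
    exact detLines_two_le _ _ hl
  -- Melchior restated
  have hmel' : (3:ℤ) ≤ ∑ l ∈ L, (3 - ((ig l + jr l : ℕ) : ℤ)) := by
    calc (3:ℤ) ≤ _ := hmel
      _ = _ := by
        apply Finset.sum_congr rfl
        intro l _
        rw [hM l]
  -- pointwise key inequality, summed
  have hptwise : ∑ l ∈ L, (2*(ig l:ℤ)*(jr l) - (ig l:ℤ)*((ig l:ℤ)-1) - (jr l:ℤ)*((jr l:ℤ)-1)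
        + 2*(3 - ((ig l:ℤ)+(jr l)))) ≤
      ∑ l ∈ L, 4 * (if 1 ≤ ig l ∧ 1 ≤ jr l ∧ ig l ≤ jr l + 1 ∧ jr l ≤ ig l + 1 ∧ ig l + jr l ≤ 4
        then (1:ℤ) else 0) :=
    Finset.sum_le_sum (fun l hl => key (ig l) (jr l) (hm2 l hl))
  -- RHS is 4 * card of good lines
  have hrhs : ∑ l ∈ L, 4 * (if 1 ≤ ig l ∧ 1 ≤ jr l ∧ ig l ≤ jr l + 1 ∧ jr l ≤ ig l + 1
        ∧ ig l + jr l ≤ 4 then (1:ℤ) else 0)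
      = 4 * ((L.filter (fun l => 1 ≤ ig l ∧ 1 ≤ jr l ∧ ig l ≤ jr l + 1 ∧ jr l ≤ ig l + 1
        ∧ ig l + jr l ≤ 4)).card : ℤ) := by
    rw [← Finset.mul_sum, Finset.sum_boole]
  -- split the LHS sum
  have hsplit : ∑ l ∈ L, (2*(ig l:ℤ)*(jr l) - (ig l:ℤ)*((ig l:ℤ)-1) - (jr l:ℤ)*((jr l:ℤ)-1)
        + 2*(3 - ((ig l:ℤ)+(jr l)))) =
      2 * (∑ l ∈ L, (ig l:ℤ)*(jr l))
      - (∑ l ∈ L, ((ig l:ℤ)*((ig l:ℤ)-1) + (jr l:ℤ)*((jr l:ℤ)-1)))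
      + 2 * (∑ l ∈ L, (3 - ((ig l + jr l : ℕ) : ℤ))) := by
    rw [Finset.mul_sum, Finset.mul_sum, ← Finset.sum_sub_distrib, ← Finset.sum_add_distrib]
    apply Finset.sum_congr rfl
    intro l _
    push_cast
    ring
  -- identity 1
  have h1 : (∑ l ∈ L, (ig l:ℤ)*(jr l)) = (n : ℤ) * (R.card : ℤ) := by
    have := congrArg (fun x : ℕ => (x : ℤ)) hbi
    push_cast at this
    rw [hG] at this
    exact_mod_cast this
  -- identity 2
  have h2 : (∑ l ∈ L, ((ig l:ℤ)*((ig l:ℤ)-1) + (jr l:ℤ)*((jr l:ℤ)-1)))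
      = (n:ℤ)*((n:ℤ)-1) + (R.card:ℤ)*((R.card:ℤ)-1) := by
    have hc := congrArg (fun x : ℕ => 2 * (x : ℤ)) hmono
    push_cast at hc
    rw [Finset.mul_sum] at hc
    calc (∑ l ∈ L, ((ig l:ℤ)*((ig l:ℤ)-1) + (jr l:ℤ)*((jr l:ℤ)-1)))
        = ∑ l ∈ L, 2 * (((ig l).choose 2 : ℤ) + ((jr l).choose 2 : ℤ)) := by
          apply Finset.sum_congr rfl
          intro l _
          have e1 := cast_choose_two (ig l)
          have e2 := cast_choose_two (jr l)
          push_cast at e1 e2 ⊢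
          linarith
      _ = 2 * (((G.card.choose 2 : ℕ) : ℤ) + ((R.card.choose 2 : ℕ) : ℤ)) := by
          rw [← Finset.mul_sum] at hc ⊢
          exact_mod_cast hc
      _ = (n:ℤ)*((n:ℤ)-1) + (R.card:ℤ)*((R.card:ℤ)-1) := by
          rw [← hG]
          linarith [cast_choose_two G.card, cast_choose_two R.card]
  -- combine: 4 * E ≥ 2*n*r - (n(n-1)+r(r-1)) + 6
  have hr' : ((R.card : ℕ) : ℤ) = (n : ℤ) - (k : ℤ) := by
    rw [hR]; push_cast [hk]; ring
  have hmain : (2*(n:ℤ) + 6 - (k:ℤ)*((k:ℤ)+1)) ≤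
      4 * ((L.filter (fun l => 1 ≤ ig l ∧ 1 ≤ jr l ∧ ig l ≤ jr l + 1 ∧ jr l ≤ ig l + 1
        ∧ ig l + jr l ≤ 4)).card : ℤ) := by
    rw [← hrhs]
    have := hptwise
    rw [hsplit, h1, h2] at this
    have h3 := hmel'
    nlinarith [sq_nonneg ((n:ℤ) - R.card)]
  -- finish: cast to ℚ
  rw [ge_iff_le, div_le_iff₀ (by norm_num : (0:ℚ) < 4)]
  have hq : ((2*(n:ℤ) + 6 - (k:ℤ)*((k:ℤ)+1) : ℤ) : ℚ) ≤
      ((4 * ((L.filter (fun l => 1 ≤ ig l ∧ 1 ≤ jr l ∧ ig l ≤ jr l + 1 ∧ jr l ≤ ig l + 1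
        ∧ ig l + jr l ≤ 4)).card : ℤ) : ℤ) : ℚ) := Int.cast_le.mpr hmain
  push_cast at hq
  linarith
end

section
/- Suppose nonnegative integers t_{i,j} (finitely supported, i+j ≥ 2) satisfy Σ ij·t_{i,j} = n(n−k), Σ (C(i,2)+C(j,2))·t_{i,j} = C(n,2)+C(n−k,2), and Melchior's inequality Σ (3−(i+j))·t_{i,j} ≥ 3. Then the total number of 1-equichromatic lines, i.e. Σ over pairs with |i−j| ≤ 1 and i,j ≥ 1 of t_{i,j}, is at least (t + 2n + 3 − k(k+1))/4, where t = Σ t_{i,j} is the total number of lines. -/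
lemma choose2_cast (m : ℕ) : ((m.choose 2 : ℤ)) * 2 = (m : ℤ) * ((m : ℤ) - 1) := by
  induction m with
  | zero => simp
  | succ p ih =>
    rw [Nat.choose_succ_succ, Nat.choose_one_right]
    push_cast
    push_cast at ih
    ring_nf
    ring_nf at ih
    linarith

/-- Abstract version of Purdy–Smith Theorem 1: from the two pair-counting identities
and Melchior's inequality, the total number of 1-equichromatic lines is at least
`(t + 2n + 3 - k(k+1))/4`, where `t` is the total number of lines. -/
theorem stmt_10 (n k : ℕ) (hk : k ≤ n) (t : (ℕ × ℕ) →₀ ℕ)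
    (hsupp : ∀ p ∈ t.support, 2 ≤ p.1 + p.2)
    (ha : t.sum (fun p v => (p.1 : ℤ) * (p.2 : ℤ) * v) = (n : ℤ) * ((n : ℤ) - k))
    (hb : t.sum (fun p v => ((p.1.choose 2 : ℤ) + (p.2.choose 2 : ℤ)) * v)
        = (n.choose 2 : ℤ) + ((n - k).choose 2 : ℤ))
    (hmel : t.sum (fun p v => (3 - ((p.1 : ℤ) + p.2)) * v) ≥ 3) :
    t.sum (fun p v => if 1 ≤ p.1 ∧ 1 ≤ p.2 ∧ p.1 ≤ p.2 + 1 ∧ p.2 ≤ p.1 + 1 then (v : ℚ) else 0)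
      ≥ ((t.sum fun _ v => (v : ℚ)) + 2 * (n : ℚ) + 3 - (k : ℚ) * (k + 1)) / 4 := by
  classical
  simp only [Finsupp.sum] at *
  set s := t.support with hs
  -- the squared-difference sum as a combination of the given sums
  have hF : ∑ p ∈ s, (((p.1 : ℤ) - p.2)^2 * t p)
      = ∑ p ∈ s, (2 * (((p.1.choose 2 : ℤ) + (p.2.choose 2 : ℤ)) * t p)
          - 2 * ((p.1 : ℤ) * (p.2 : ℤ) * t p)
          + 3 * (t p : ℤ) - (3 - ((p.1 : ℤ) + p.2)) * t p) := by
    apply Finset.sum_congr rfl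
    intro p _
    have h1 := choose2_cast p.1
    have h2 := choose2_cast p.2
    nlinarith [h1, h2]
  -- pointwise inequality
  have hP : ∀ p ∈ s, 4 * (t p : ℤ)
      ≤ ((p.1 : ℤ) - p.2)^2 * t p
        + 4 * (if 1 ≤ p.1 ∧ 1 ≤ p.2 ∧ p.1 ≤ p.2 + 1 ∧ p.2 ≤ p.1 + 1 then (t p : ℤ) else 0) := by
    intro p hp
    have h2 := hsupp p hp
    by_cases hc : 1 ≤ p.1 ∧ 1 ≤ p.2 ∧ p.1 ≤ p.2 + 1 ∧ p.2 ≤ p.1 + 1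
    · rw [if_pos hc]
      nlinarith [sq_nonneg ((p.1 : ℤ) - p.2), Int.ofNat_nonneg (t p)]
    · rw [if_neg hc]
      have hsq : 4 ≤ ((p.1 : ℤ) - p.2)^2 := by
        have : p.1 + 2 ≤ p.2 ∨ p.2 + 2 ≤ p.1 := by omega
        rcases this with h | h
        · have : (p.1 : ℤ) + 2 ≤ p.2 := by exact_mod_cast h
          nlinarith
        · have : (p.2 : ℤ) + 2 ≤ p.1 := by exact_mod_cast h
          nlinarith
      nlinarith [Int.ofNat_nonneg (t p)]
  have hsum := Finset.sum_le_sum hP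
  rw [Finset.sum_add_distrib, hF] at hsum
  simp only [Finset.sum_sub_distrib, Finset.sum_add_distrib, ← Finset.mul_sum] at hsum
  -- compute 2A - 2B
  have hnk : ((n - k : ℕ) : ℤ) = (n : ℤ) - k := by
    omega
  have hc1 := choose2_cast n
  have hc2 := choose2_cast (n - k)
  rw [hnk] at hc2
  -- integer inequality
  have hE : (∑ p ∈ s, (t p : ℤ)) + 2 * n + 3 - k * (k + 1)
      ≤ 4 * ∑ p ∈ s, (if 1 ≤ p.1 ∧ 1 ≤ p.2 ∧ p.1 ≤ p.2 + 1 ∧ p.2 ≤ p.1 + 1 then (t p : ℤ) else 0) := by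
    have hkZ : (k : ℤ) ≤ n := by exact_mod_cast hk
    nlinarith [hsum, ha, hb, hmel]
  -- cast to ℚ
  have hQ : (((∑ p ∈ s, (t p : ℤ)) + 2 * n + 3 - k * (k + 1) : ℤ) : ℚ)
      ≤ ((4 * ∑ p ∈ s, (if 1 ≤ p.1 ∧ 1 ≤ p.2 ∧ p.1 ≤ p.2 + 1 ∧ p.2 ≤ p.1 + 1 then (t p : ℤ) else 0) : ℤ) : ℚ) := by
    exact_mod_cast hE
  push_cast [apply_ite (fun x : ℤ => (x : ℚ))] at hQ
  rw [ge_iff_le, div_le_iff₀ (by norm_num : (0:ℚ) < 4)]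
  push_cast
  linarith
end
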